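/- Let R be a semiartinian von Neumann regular ring with primitive factors artinian. Then the class of layer projective right R-modules is closed under submodules. -/

import Mathlib

universe u

open Submodule

/-- The socle of a module: the supremum of all simple submodules. -/
noncomputable def socle (R : Type u) [Ring R] (M : Type u) [AddCommGroup M] [Module R M] :
    Submodule R M :=
  sSup {S : Submodule R M | IsAtom S}

/-- The Loewy (socle) sequence of a module, defined by transfinite recursion:
`loewy R M 0 = ⊥`, `loewy R M (α+1) / loewy R M α = Soc (M ⧸ loewy R M α)`, and unions
at limit ordinals. -/
noncomputable def loewy (R : Type u) [Ring R] (M : Type u) [AddCommGroup M] [Module R M]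
    (o : Ordinal.{u}) : Submodule R M :=
  o.limitRecOn ⊥ (fun _ N => (socle R (M ⧸ N)).comap N.mkQ)
    (fun o _ IH => ⨆ (b : Ordinal) (h : b < o), IH b h)

/-- The Loewy length of a module: the least ordinal `o` with `loewy R M o = ⊤`. -/
noncomputable def loewyLength (R : Type u) [Ring R] (M : Type u) [AddCommGroup M]
    [Module R M] : Ordinal.{u} :=
  sInf {o : Ordinal | loewy R M o = ⊤}

/-- A ring is semiartinian if every nonzero module has a nonzero socle. -/
def IsSemiartinianRing (R : Type u) [Ring R] : Prop :=
  ∀ (M : Type u) [AddCommGroup M] [Module R M], Nontrivial M → socle R M ≠ ⊥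

/-- A ring is von Neumann regular if for every `r` there is `s` with `r * s * r = r`. -/
def IsVonNeumannRegularRing (R : Type u) [Ring R] : Prop :=
  ∀ r : R, ∃ s : R, r * s * r = r

/-- `R` has primitive factors artinian: for every primitive ideal `P` (= annihilator of a
simple module), the factor `R/P` is artinian. -/
def HasPrimitiveFactorsArtinian (R : Type u) [Ring R] : Prop :=
  ∀ (M : Type u) [AddCommGroup M] [Module R M], IsSimpleModule R M →
    IsArtinian R (R ⧸ (Module.annihilator R M : Submodule R R))

/-- The `α`-th layer of the Loewy sequence of `R`, as a submodule of `R ⧸ loewy R R α`. -/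
noncomputable def loewyLayer (R : Type u) [Ring R] (α : Ordinal.{u}) :
    Submodule R (R ⧸ loewy R R α) :=
  (loewy R R (α + 1)).map (loewy R R α).mkQ

/-- The canonical projection `π_α : S_{α+1} → S_{α+1}/S_α`. -/
noncomputable def layerProj (R : Type u) [Ring R] (α : Ordinal.{u}) :
    (loewy R R (α + 1) : Submodule R R) →ₗ[R] (loewyLayer R α) :=
  LinearMap.codRestrict _ ((loewy R R α).mkQ.comp (loewy R R (α + 1)).subtype)
    (fun x => ⟨(x : R), x.2, rfl⟩)

/-- `M` is weakly `R`-projective: every homomorphism from `M` to a layer `S_{α+1}/S_α`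
(`0 < α`) with finitely generated image factors through `π_α : S_{α+1} → S_{α+1}/S_α`. -/
def IsWeaklyRProjective (R : Type u) [Ring R] (M : Type u) [AddCommGroup M]
    [Module R M] : Prop :=
  ∀ α : Ordinal.{u}, 0 < α →
    ∀ φ : M →ₗ[R] (loewyLayer R α), (LinearMap.range φ).FG →
      ∃ ψ : M →ₗ[R] (loewy R R (α + 1) : Submodule R R), (layerProj R α).comp ψ = φ

/-- `M` is layer projective: for each `0 < α`, every simple submodule of the `α`-th layer of
`M` is isomorphic to a simple (direct summand) submodule of the `α`-th layer of `R`, i.e. the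
`α`-th layer of `M` is a projective `R/S_α`-module. -/
def IsLayerProjective (R : Type u) [Ring R] (M : Type u) [AddCommGroup M]
    [Module R M] : Prop :=
  ∀ α : Ordinal.{u}, 0 < α →
    ∀ T : Submodule R ((loewy R M (α + 1)).map (loewy R M α).mkQ), IsAtom T →
      ∃ T' : Submodule R (loewyLayer R α), IsAtom T' ∧ Nonempty (T ≃ₗ[R] T')

/-- The submodule `M·S` of `M`, generated by all products `s • m` with `s ∈ S`. -/
def smulSub (R : Type u) [Ring R] (M : Type u) [AddCommGroup M] [Module R M]
    (S : Submodule R R) : Submodule R M :=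
  Submodule.span R {x : M | ∃ s ∈ S, ∃ m : M, s • m = x}


section Aux
variable {R : Type u} [Ring R] {M : Type u} [AddCommGroup M] [Module R M]
variable {A B : Type u} [AddCommGroup A] [Module R A] [AddCommGroup B] [Module R B]

lemma loewy_zero : loewy R M 0 = ⊥ := Ordinal.limitRecOn_zero _ _ _

lemma loewy_succ (o : Ordinal.{u}) :
    loewy R M (o + 1) = (socle R (M ⧸ loewy R M o)).comap (loewy R M o).mkQ := by
  unfold loewy
  rw [Ordinal.add_one_eq_succ, Ordinal.limitRecOn_succ]

lemma loewy_limit {o : Ordinal.{u}} (h : Order.IsSuccLimit o) :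
    loewy R M o = ⨆ (b : Ordinal) (_ : b < o), loewy R M b :=
  Ordinal.limitRecOn_limit _ _ _ _ h

lemma isAtom_map_of_injective (f : A →ₗ[R] B) (hf : Function.Injective f)
    {S : Submodule R A} (hS : IsAtom S) : IsAtom (S.map f) := by
  rw [← isSimpleModule_iff_isAtom] at *
  exact IsSimpleModule.congr (Submodule.equivMapOfInjective f hf S).symm

lemma socle_isSemisimple : IsSemisimpleModule R (socle R M) := by
  have h : socle R M = ⨆ S ∈ {S : Submodule R M | IsAtom S}, S := sSup_eq_iSup
  have h2 : IsSemisimpleModule R ↥(⨆ S ∈ {S : Submodule R M | IsAtom S}, S) :=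
    isSemisimpleModule_biSup_of_isSemisimpleModule_submodule
      (p := fun S : Submodule R M => S)
      (fun S hS => by
        haveI : IsSimpleModule R S := isSimpleModule_iff_isAtom.2 hS
        infer_instance)
  rw [h]
  exact h2

lemma socle_comap_of_injective (f : A →ₗ[R] B) (hf : Function.Injective f) :
    socle R A = (socle R B).comap f := by
  apply le_antisymm
  · apply sSup_le
    intro S hS
    rw [← Submodule.map_le_iff_le_comap]
    exact le_sSup (isAtom_map_of_injective f hf hS)
  · set C := (socle R B).comap f with hC
    have hres : ∀ x ∈ C, f x ∈ socle R B := fun x hx => hx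
    set g : C →ₗ[R] socle R B := f.restrict hres with hg
    have hginj : Function.Injective g := fun a b hab => by
      apply Subtype.ext; apply hf
      have : (g a : B) = g b := congrArg _ hab
      simpa [hg, LinearMap.restrict_apply] using this
    haveI : IsSemisimpleModule R (socle R B) := socle_isSemisimple
    haveI : IsSemisimpleModule R (LinearMap.range g) := inferInstance
    haveI : IsSemisimpleModule R C :=
      IsSemisimpleModule.congr (LinearEquiv.ofInjective g hginj)
    -- now C is a semisimple module, show C ≤ socle R A
    have htop : sSup {m : Submodule R C | IsSimpleModule R m} = ⊤ :=
      IsSemisimpleModule.sSup_simples_eq_top R C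
    intro x hx
    have hx' : (⟨x, hx⟩ : C) ∈ (⊤ : Submodule R C) := trivial
    rw [← htop, sSup_eq_iSup'] at hx'
    have : x ∈ Submodule.map C.subtype (⨆ (m : {m : Submodule R C | IsSimpleModule R m}), (m : Submodule R C)) :=
      ⟨_, hx', rfl⟩
    rw [Submodule.map_iSup] at this
    have hle : (⨆ (m : {m : Submodule R C | IsSimpleModule R m}),
        Submodule.map C.subtype (m : Submodule R C)) ≤ socle R A :=
      iSup_le fun m => le_sSup
        (isAtom_map_of_injective C.subtype (Submodule.injective_subtype C)
          (isSimpleModule_iff_isAtom.1 m.2))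
    exact hle this

lemma loewy_le_succ (o : Ordinal.{u}) : loewy R M o ≤ loewy R M (o + 1) := by
  rw [loewy_succ]
  intro x hx
  have h0 : (loewy R M o).mkQ x = 0 := (Submodule.Quotient.mk_eq_zero _).2 hx
  simp only [Submodule.mem_comap, h0]
  exact zero_mem _

lemma loewy_mono : Monotone (loewy (R := R) (M := M)) := by
  intro a b hab
  induction b using Ordinal.limitRecOn with
  | zero =>
    rw [nonpos_iff_eq_zero] at hab
    subst hab; exact le_rfl
  | add_one o IH =>
    rcases eq_or_lt_of_le hab with h | h
    · subst h; exact le_rfl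
    · have h' : a ≤ o := Order.lt_add_one_iff.1 h
      exact (IH h').trans (loewy_le_succ o)
  | limit o ho IH =>
    rcases eq_or_lt_of_le hab with h | h
    · subst h; exact le_rfl
    · rw [loewy_limit ho]
      exact le_iSup₂ (f := fun b (_ : b < o) => loewy R M b) a h

lemma loewy_submodule (N : Submodule R M) (o : Ordinal.{u}) :
    loewy R ↥N o = (loewy R M o).comap N.subtype := by
  induction o using Ordinal.limitRecOn with
  | zero => rw [loewy_zero, loewy_zero, Submodule.comap_bot, Submodule.ker_subtype]
  | add_one o IH =>
    rw [loewy_succ, loewy_succ]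
    set Sn := loewy R ↥N o with hSn
    set Sm := loewy R M o with hSm
    have hle : Sn ≤ Sm.comap N.subtype := le_of_eq IH
    set f : (↥N ⧸ Sn) →ₗ[R] (M ⧸ Sm) := Submodule.mapQ Sn Sm N.subtype hle with hf
    have hker0 : LinearMap.ker (Sm.mkQ.comp N.subtype) ≤ Sn := by
      rw [LinearMap.ker_comp, Submodule.ker_mkQ, ← IH]
    have hker : LinearMap.ker f = ⊥ :=
      Submodule.ker_liftQ_eq_bot _ _ _ hker0
    have hinj : Function.Injective f := LinearMap.ker_eq_bot.1 hker
    have hcomm : f.comp Sn.mkQ = Sm.mkQ.comp N.subtype := by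
      ext x; simp [hf, Submodule.mapQ_apply]
    rw [socle_comap_of_injective f hinj, ← Submodule.comap_comp, hcomm,
      Submodule.comap_comp]
  | limit o ho IH =>
    rw [loewy_limit ho, loewy_limit ho]
    apply le_antisymm
    · refine iSup₂_le fun b hb => ?_
      rw [IH b hb]
      exact Submodule.comap_mono (le_iSup₂ (f := fun b (_ : b < o) => loewy R M b) b hb)
    · intro x hx
      have heq : (⨆ (i : {b : Ordinal // b < o}), loewy R M i.1)
          = ⨆ b, ⨆ (_ : b < o), loewy R M b := iSup_subtype
      have hx' : (x : M) ∈ ⨆ (i : {b : Ordinal // b < o}), loewy R M i.1 := by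
        rw [heq]; exact hx
      haveI : Nonempty {b : Ordinal // b < o} := ⟨⟨0, ho.pos⟩⟩
      have hdir : Directed (· ≤ ·) fun i : {b : Ordinal // b < o} => loewy R M i :=
        fun i j => ⟨⟨max i.1 j.1, max_lt i.2 j.2⟩, loewy_mono (le_max_left _ _),
          loewy_mono (le_max_right _ _)⟩
      obtain ⟨i, hi⟩ := (Submodule.mem_iSup_of_directed _ hdir).1 hx'
      have : x ∈ loewy R ↥N i := by rw [IH i i.2]; exact hi
      exact le_iSup₂ (f := fun b (_ : b < o) => loewy R ↥N b) i.1 i.2 this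

noncomputable def loewyMapQ {M : Type u} [AddCommGroup M] [Module R M]
    (N : Submodule R M) (o : Ordinal.{u}) :
    (↥N ⧸ loewy R ↥N o) →ₗ[R] (M ⧸ loewy R M o) :=
  Submodule.mapQ _ _ N.subtype (le_of_eq (loewy_submodule N o))

lemma loewyMapQ_inj (N : Submodule R M) (o : Ordinal.{u}) :
    Function.Injective (loewyMapQ N o) := by
  apply LinearMap.ker_eq_bot.1
  apply Submodule.ker_liftQ_eq_bot
  rw [LinearMap.ker_comp, Submodule.ker_mkQ, ← loewy_submodule N o]

lemma loewyMapQ_comp (N : Submodule R M) (o : Ordinal.{u}) :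
    (loewyMapQ N o).comp (loewy R ↥N o).mkQ = (loewy R M o).mkQ.comp N.subtype := by
  ext x; simp [loewyMapQ, Submodule.mapQ_apply]

end Aux

/-- Over a semiartinian von Neumann regular ring with primitive factors artinian, the class of
layer projective modules is closed under submodules. -/
theorem isLayerProjective_submodule
    (R : Type u) [Ring R] (hsa : IsSemiartinianRing R)
    (hvnr : IsVonNeumannRegularRing R) (hpfa : HasPrimitiveFactorsArtinian R)
    (M : Type u) [AddCommGroup M] [Module R M]
    (hM : IsLayerProjective R M) (N : Submodule R M) :
    IsLayerProjective R N := by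
  intro α hα
  set f := loewyMapQ N α with hfdef
  have hinj := loewyMapQ_inj N α
  have hcomm := loewyMapQ_comp N α
  set Ln : Submodule R (↥N ⧸ loewy R ↥N α) :=
    (loewy R ↥N (α + 1)).map (loewy R ↥N α).mkQ with hLn
  set Lm : Submodule R (M ⧸ loewy R M α) :=
    (loewy R M (α + 1)).map (loewy R M α).mkQ with hLm
  intro T hT
  have hmaple : Ln.map f ≤ Lm := by
    rw [hLn, ← Submodule.map_comp, hcomm, Submodule.map_comp, loewy_submodule N (α + 1)]
    refine Submodule.map_mono ?_
    rw [Submodule.map_comap_subtype]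
    exact inf_le_right
  set U := T.map Ln.subtype with hUdef
  set V := U.map f with hVdef
  have hVle : V ≤ Lm :=
    le_trans (Submodule.map_mono (Submodule.map_subtype_le Ln T)) hmaple
  have hU : IsAtom U := isAtom_map_of_injective Ln.subtype (Submodule.injective_subtype Ln) hT
  have hV : IsAtom V := isAtom_map_of_injective f hinj hU
  have hVrange : V ≤ LinearMap.range Lm.subtype := by
    rw [Submodule.range_subtype]; exact hVle
  set T' := V.comap Lm.subtype with hT'def
  have e : T' ≃ₗ[R] V :=
    Submodule.comap_equiv_self_of_inj_of_le (Submodule.injective_subtype Lm) hVrange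
  have hT' : IsAtom T' := by
    rw [← isSimpleModule_iff_isAtom] at hV ⊢
    haveI := hV
    exact IsSimpleModule.congr e
  obtain ⟨T'', hT'', ⟨g⟩⟩ := hM α hα T' hT'
  refine ⟨T'', hT'', ⟨?_⟩⟩
  exact (((Submodule.equivMapOfInjective Ln.subtype (Submodule.injective_subtype Ln) T).trans
    (Submodule.equivMapOfInjective f hinj U)).trans e.symm).trans g
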